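/- Let J ⊆ ℝ be an open interval, let p, q : J → ℝ with p differentiable on J, let u : J → ℝ be twice differentiable on J with u(t) ≠ 0 for all t ∈ J and with p·u′ differentiable on J, and suppose u lies in the kernel of the operator, i.e. (p·u′)′(t) + q(t)·u(t) = 0 for all t ∈ J. Then for every twice differentiable y : J → ℝ such that p·y′ and p·u²·(y/u)′ are differentiable on J, the identity (p·y′)′(t) + q(t)·y(t) = (1/u(t))·(p·u²·(y/u)′)′(t) holds for all t ∈ J. -/

import Mathlib

/-- Product representation of the self-adjoint second-order operator: if `u` is a
nonvanishing solution of `(p·u′)′ + q·u = 0` on an open interval `J`, then for every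
sufficiently differentiable `y`,
`(p·y′)′(t) + q(t)·y(t) = (1/u(t))·(p·u²·(y/u)′)′(t)` on `J`. -/
theorem stmt_12 (J : Set ℝ) (hJopen : IsOpen J) (hJconn : J.OrdConnected)
    (p q u : ℝ → ℝ)
    (hp : ∀ t ∈ J, DifferentiableAt ℝ p t)
    (hu : ∀ t ∈ J, DifferentiableAt ℝ u t)
    (hu' : ∀ t ∈ J, DifferentiableAt ℝ (deriv u) t)
    (hu0 : ∀ t ∈ J, u t ≠ 0)
    (hpu' : ∀ t ∈ J, DifferentiableAt ℝ (fun s => p s * deriv u s) t)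
    (hker : ∀ t ∈ J, deriv (fun s => p s * deriv u s) t + q t * u t = 0)
    (y : ℝ → ℝ)
    (hy : ∀ t ∈ J, DifferentiableAt ℝ y t)
    (hy' : ∀ t ∈ J, DifferentiableAt ℝ (deriv y) t)
    (hpy' : ∀ t ∈ J, DifferentiableAt ℝ (fun s => p s * deriv y s) t)
    (hpu2 : ∀ t ∈ J,
      DifferentiableAt ℝ (fun s => p s * u s ^ 2 * deriv (fun r => y r / u r) s) t) :
    ∀ t ∈ J, deriv (fun s => p s * deriv y s) t + q t * y t =
      (1 / u t) * deriv (fun s => p s * u s ^ 2 * deriv (fun r => y r / u r) s) t := by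

  intro t ht
  have hF : ∀ s ∈ J, p s * u s ^ 2 * deriv (fun r => y r / u r) s =
      u s * (p s * deriv y s) - y s * (p s * deriv u s) := by
    intro s hs
    have hd : deriv (fun r => y r / u r) s =
        (deriv y s * u s - y s * deriv u s) / (u s) ^ 2 :=
      deriv_div (hy s hs) (hu s hs) (hu0 s hs)
    rw [hd]
    field_simp [hu0 s hs]
  have heq : deriv (fun s => p s * u s ^ 2 * deriv (fun r => y r / u r) s) t =
      deriv (fun s => u s * (p s * deriv y s) - y s * (p s * deriv u s)) t := by
    apply Filter.EventuallyEq.deriv_eq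
    filter_upwards [hJopen.mem_nhds ht] with s hs using hF s hs
  have hderiv : deriv (fun s => u s * (p s * deriv y s) - y s * (p s * deriv u s)) t =
      (deriv u t * (p t * deriv y t) + u t * deriv (fun s => p s * deriv y s) t) -
      (deriv y t * (p t * deriv u t) + y t * deriv (fun s => p s * deriv u s) t) := by
    rw [deriv_fun_sub ((hu t ht).fun_mul (hpy' t ht)) ((hy t ht).fun_mul (hpu' t ht)),
      deriv_fun_mul (hu t ht) (hpy' t ht), deriv_fun_mul (hy t ht) (hpu' t ht)]
  have hk : deriv (fun s => p s * deriv u s) t = - (q t * u t) := by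
    have := hker t ht; linarith
  rw [heq, hderiv, hk]
  have h0 := hu0 t ht
  field_simp
  ring
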